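/- Fix real numbers a11, a12, a21, a22, σx, σy, R with a22 ≠ 0 and R > 0. Let ε₀ > 0 and let s11, s12, s22 : (0, ε₀) → ℝ be such that for each ε ∈ (0, ε₀), (s11(ε), s12(ε), s22(ε)) solves the two-scale algebraic Riccati system, and suppose s11 and s12 are bounded on (0, ε₀). Then the residual ε ↦ −s11(ε)²/R + 2*ã*(1 − ε*â)*s11(ε) + σx²*(1 − 2ε*â) + ε*σy²*a12²/a22² is O(ε²) as ε → 0⁺. -/

import Mathlib

/-- The two-scale algebraic Riccati system. -/
def SolvesRiccati (a11 a12 a21 a22 σx σy R ε s11 s12 s22 : ℝ) : Prop :=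
  0 = σx ^ 2 - s11 ^ 2 / R + 2 * a11 * s11 + 2 * a12 * s12 ∧
  0 = a11 * s12 + a12 * s22 - s11 * s12 / R + s11 * a21 / ε + s12 * a22 / ε ∧
  0 = σy ^ 2 / ε - s12 ^ 2 / R + 2 * s12 * a21 / ε + 2 * s22 * a22 / ε

set_option maxHeartbeats 1000000 in
/-- the residual of the one-dimensional Riccati equation for `s11`
is `O(ε²)` as `ε → 0⁺`. -/
theorem stmt1 (a11 a12 a21 a22 σx σy R : ℝ) (ha22 : a22 ≠ 0) (hR : 0 < R)
    (ε₀ : ℝ) (hε₀ : 0 < ε₀) (s11 s12 s22 : ℝ → ℝ)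
    (hsol : ∀ ε, 0 < ε → ε < ε₀ →
      SolvesRiccati a11 a12 a21 a22 σx σy R ε (s11 ε) (s12 ε) (s22 ε))
    (hbdd : ∃ M : ℝ, ∀ ε, 0 < ε → ε < ε₀ → |s11 ε| ≤ M ∧ |s12 ε| ≤ M) :
    ∃ C ε₁ : ℝ, 0 < C ∧ 0 < ε₁ ∧ ε₁ ≤ ε₀ ∧ ∀ ε, 0 < ε → ε < ε₁ →
      |(-(s11 ε) ^ 2 / R
          + 2 * (a11 - a12 * a21 / a22) * (1 - ε * (a12 * a21 / a22 ^ 2)) * s11 ε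
          + σx ^ 2 * (1 - 2 * ε * (a12 * a21 / a22 ^ 2))
          + ε * σy ^ 2 * a12 ^ 2 / a22 ^ 2)| ≤ C * ε ^ 2 := by
  obtain ⟨M, hM⟩ := hbdd
  -- the continuous function whose values give the ε⁻²-rescaled residual
  set g : ℝ × ℝ × ℝ → ℝ := fun p =>
    (-(2 * a12 * a11 * a22 * R - 2 * a12 * a22 * p.2.1 + 2 * a12 ^ 2 * a21 * R) *
        (2 * R * a22 * a11 * p.2.2 - 2 * a22 * p.2.1 * p.2.2 +
          a12 * (-σy ^ 2 * R + p.1 * p.2.2 ^ 2 - 2 * a21 * p.2.2 * R)) +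
      2 * R * a22 ^ 2 * a12 ^ 2 * p.2.2 ^ 2) / (2 * R ^ 2 * a22 ^ 4) with hg
  have hgc : ContinuousOn g (Set.Icc (0:ℝ) 1 ×ˢ Set.Icc (-M) M ×ˢ Set.Icc (-M) M) := by
    apply Continuous.continuousOn
    fun_prop
  have hK : IsCompact (Set.Icc (0:ℝ) 1 ×ˢ Set.Icc (-M) M ×ˢ Set.Icc (-M) M) :=
    (isCompact_Icc.prod (isCompact_Icc.prod isCompact_Icc))
  obtain ⟨C₀, hC₀⟩ := hK.exists_bound_of_continuousOn hgc
  have h01 : 0 < min ε₀ 1 := lt_min hε₀ one_pos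
  have hMnonneg : 0 ≤ M := by
    have hmem : 0 < min ε₀ 1 / 2 := by linarith
    have hlt : min ε₀ 1 / 2 < ε₀ := by
      have := min_le_left ε₀ 1; linarith
    have := (hM _ hmem hlt).1
    have := abs_nonneg (s11 (min ε₀ 1 / 2))
    linarith
  have hC₀nonneg : 0 ≤ C₀ := by
    have hmem : ((0:ℝ), (0:ℝ), (0:ℝ)) ∈
        Set.Icc (0:ℝ) 1 ×ˢ Set.Icc (-M) M ×ˢ Set.Icc (-M) M := by
      refine ⟨⟨?_, ?_⟩, ⟨?_, ?_⟩, ⟨?_, ?_⟩⟩ <;> simp <;> linarith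
    exact le_trans (norm_nonneg _) (hC₀ _ hmem)
  refine ⟨C₀ + 1, min ε₀ 1, by linarith, h01, min_le_left _ _, ?_⟩
  intro ε hε hε1
  have hεε₀ : ε < ε₀ := lt_of_lt_of_le hε1 (min_le_left _ _)
  have hεle1 : ε ≤ 1 := le_of_lt (lt_of_lt_of_le hε1 (min_le_right _ _))
  obtain ⟨h1, h2, h3⟩ := hsol ε hε hεε₀
  obtain ⟨hb1, hb2⟩ := hM ε hε hεε₀
  have hRne : R ≠ 0 := ne_of_gt hR
  have hεne : ε ≠ 0 := ne_of_gt hε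
  -- cleared (polynomial) versions of the three Riccati equations
  have h1p : 0 = σx ^ 2 * R - s11 ε ^ 2 + 2 * a11 * s11 ε * R + 2 * a12 * s12 ε * R := by
    have h := congrArg (· * R) h1
    field_simp at h
    linarith
  have h2p : 0 = a11 * s12 ε * ε * R + a12 * s22 ε * ε * R - s11 ε * s12 ε * ε
      + s11 ε * a21 * R + s12 ε * a22 * R := by
    have h := h2
    field_simp at h
    have h' : ε * (a11 * s12 ε * ε * R + a12 * s22 ε * ε * R - s11 ε * s12 ε * ε
        + s11 ε * a21 * R + s12 ε * a22 * R) = ε * 0 := by linear_combination -ε * h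
    have := mul_left_cancel₀ hεne h'
    linarith
  have h3p : 0 = σy ^ 2 * R - s12 ε ^ 2 * ε + 2 * s12 ε * a21 * R
      + 2 * s22 ε * a22 * R := by
    have h := h3
    field_simp at h
    have h' : ε ^ 2 * (σy ^ 2 * R - s12 ε ^ 2 * ε + 2 * s12 ε * a21 * R
        + 2 * s22 ε * a22 * R) = ε ^ 2 * 0 := by linear_combination -ε ^ 2 * h
    have := mul_left_cancel₀ (pow_ne_zero 2 hεne) h'
    linarith
  -- the exact polynomial identity for the (cleared) residual
  have keyP : -2 * R * a22 ^ 4 * s11 ε ^ 2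
      + 4 * R ^ 2 * a22 * (a11 * a22 - a12 * a21) * (a22 ^ 2 - ε * (a12 * a21)) * s11 ε
      + 2 * R ^ 2 * a22 ^ 2 * σx ^ 2 * (a22 ^ 2 - 2 * ε * (a12 * a21))
      + 2 * ε * σy ^ 2 * a12 ^ 2 * R ^ 2 * a22 ^ 2
      = ε ^ 2 * ((-(2 * a12 * a11 * a22 * R - 2 * a12 * a22 * s11 ε + 2 * a12 ^ 2 * a21 * R) *
          (2 * R * a22 * a11 * s12 ε - 2 * a22 * s11 ε * s12 ε +
            a12 * (-σy ^ 2 * R + ε * s12 ε ^ 2 - 2 * a21 * s12 ε * R)) +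
        2 * R * a22 ^ 2 * a12 ^ 2 * s12 ε ^ 2)) := by
    linear_combination
      (-(2 * R * a22 ^ 2 * (a22 ^ 2 - 2 * ε * (a12 * a21)))) * h1p +
      (-(-4 * R * a22 ^ 3 * a12 + 2 * ε *
        (2 * a12 * a11 * a22 * R - 2 * a12 * a22 * s11 ε + 2 * a12 ^ 2 * a21 * R) * a22)) * h2p +
      (-(2 * ε * R * a22 ^ 2 * a12 ^ 2 - ε ^ 2 * a12 *
        (2 * a12 * a11 * a22 * R - 2 * a12 * a22 * s11 ε + 2 * a12 ^ 2 * a21 * R))) * h3p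
  -- the residual equals ε² · g(ε, s11 ε, s12 ε)
  have hden : -(s11 ε) ^ 2 / R
        + 2 * (a11 - a12 * a21 / a22) * (1 - ε * (a12 * a21 / a22 ^ 2)) * s11 ε
        + σx ^ 2 * (1 - 2 * ε * (a12 * a21 / a22 ^ 2))
        + ε * σy ^ 2 * a12 ^ 2 / a22 ^ 2
      = (-2 * R * a22 ^ 4 * s11 ε ^ 2
        + 4 * R ^ 2 * a22 * (a11 * a22 - a12 * a21) * (a22 ^ 2 - ε * (a12 * a21)) * s11 ε
        + 2 * R ^ 2 * a22 ^ 2 * σx ^ 2 * (a22 ^ 2 - 2 * ε * (a12 * a21))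
        + 2 * ε * σy ^ 2 * a12 ^ 2 * R ^ 2 * a22 ^ 2) / (2 * R ^ 2 * a22 ^ 4) := by
    field_simp
    ring
  have hres : -(s11 ε) ^ 2 / R
        + 2 * (a11 - a12 * a21 / a22) * (1 - ε * (a12 * a21 / a22 ^ 2)) * s11 ε
        + σx ^ 2 * (1 - 2 * ε * (a12 * a21 / a22 ^ 2))
        + ε * σy ^ 2 * a12 ^ 2 / a22 ^ 2
      = ε ^ 2 * g (ε, s11 ε, s12 ε) := by
    have hgv : g (ε, s11 ε, s12 ε)
        = (-(2 * a12 * a11 * a22 * R - 2 * a12 * a22 * s11 ε + 2 * a12 ^ 2 * a21 * R) *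
            (2 * R * a22 * a11 * s12 ε - 2 * a22 * s11 ε * s12 ε +
              a12 * (-σy ^ 2 * R + ε * s12 ε ^ 2 - 2 * a21 * s12 ε * R)) +
          2 * R * a22 ^ 2 * a12 ^ 2 * s12 ε ^ 2) / (2 * R ^ 2 * a22 ^ 4) := by
      rw [hg]
    rw [hgv]
    conv_rhs => rw [← mul_div_assoc]
    rw [← keyP]
    exact hden
  rw [hres, abs_mul, abs_of_nonneg (by positivity : (0:ℝ) ≤ ε ^ 2)]
  have hmem : (ε, s11 ε, s12 ε) ∈
      Set.Icc (0:ℝ) 1 ×ˢ Set.Icc (-M) M ×ˢ Set.Icc (-M) M :=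
    ⟨⟨le_of_lt hε, hεle1⟩, abs_le.mp hb1, abs_le.mp hb2⟩
  have hgb : |g (ε, s11 ε, s12 ε)| ≤ C₀ := by
    have := hC₀ _ hmem
    rwa [Real.norm_eq_abs] at this
  calc ε ^ 2 * |g (ε, s11 ε, s12 ε)| ≤ ε ^ 2 * (C₀ + 1) := by
        apply mul_le_mul_of_nonneg_left (by linarith) (by positivity)
    _ = (C₀ + 1) * ε ^ 2 := by ring
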